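/- Any (t,m,d)-net in base b has at most b^{t+⌈(m−t)/d⌉} points on the main diagonal {(x,x,…,x) : x ∈ [0,1)}. -/

import Mathlib

/-- Telescoping sum of capped increments. -/
lemma aux_min_sum (q s : ℕ) : ∀ n, ∑ j ∈ Finset.range n, min q (s - q * j) = min s (q * n) := by
  intro n
  induction n with
  | zero => simp
  | succ n ih =>
    rw [Finset.sum_range_succ, ih]
    have h : q * (n + 1) = q * n + q := by ring
    rw [h]
    omega

/-- Any `(t,m,d)`-net in base `b` has at most `b^(t + ⌈(m-t)/d⌉)` points on the main
diagonal of `[0,1)^d`. -/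
theorem stmt9 (b d m t : ℕ) (hb : 2 ≤ b) (hd : 1 ≤ d) (ht : t ≤ m)
    (x : Fin (b ^ m) → Fin d → ℝ) (hx : ∀ i j, x i j ∈ Set.Ico (0:ℝ) 1)
    (hnet : ∀ k a : Fin d → ℕ, (∀ j, a j < b ^ k j) → (∑ j, k j) ≤ m - t →
      Nat.card {i : Fin (b ^ m) // ∀ j,
        x i j ∈ Set.Ico ((a j : ℝ) / (b : ℝ) ^ k j) (((a j : ℝ) + 1) / (b : ℝ) ^ k j)} =
        b ^ (m - ∑ j, k j)) :
    Nat.card {i : Fin (b ^ m) // ∀ j j', x i j = x i j'} ≤ b ^ (t + (m - t + d - 1) / d) := by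
  classical
  set s := m - t with hs
  set q := (m - t + d - 1) / d with hq
  have hb0 : 0 < b := by omega
  have hbR : (0:ℝ) < (b : ℝ) := by exact_mod_cast hb0
  have hd0 : 0 < d := hd
  -- s ≤ d * q
  have hdq : s ≤ q * d := by
    have h1 := Nat.div_add_mod (m - t + d - 1) d
    have h2 : (m - t + d - 1) % d < d := Nat.mod_lt _ hd0
    rw [← hq] at h1
    have h3 : q * d = d * q := Nat.mul_comm q d
    omega
  -- exponents
  set k : Fin d → ℕ := fun j => min q (s - q * j.val) with hk
  have hkle : ∀ j, k j ≤ q := fun j => min_le_left _ _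
  have hsum : ∑ j, k j = s := by
    have h := aux_min_sum q s d
    have h2 : ∑ j : Fin d, k j = ∑ j ∈ Finset.range d, min q (s - q * j) := by
      simp only [hk]
      exact Fin.sum_univ_eq_sum_range (fun j => min q (s - q * j)) d
    rw [h2, h]
    omega
  have j0 : Fin d := ⟨0, hd0⟩
  -- diagonal predicate
  set P : Fin (b ^ m) → Prop := fun i => ∀ j j', x i j = x i j' with hP
  have hcardP : Nat.card {i // P i} = (Finset.univ.filter P).card := by
    rw [Nat.card_eq_fintype_card, Fintype.card_subtype]
  rw [hcardP]
  -- floor map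
  set fl : Fin (b ^ m) → ℕ := fun i => ⌊x i j0 * (b : ℝ) ^ q⌋₊ with hfl
  have hfl_lt : ∀ i, fl i < b ^ q := by
    intro i
    have h0 := (hx i j0).1
    have h1 := (hx i j0).2
    have hqpos : (0:ℝ) < (b:ℝ) ^ q := pow_pos hbR q
    have hnn : 0 ≤ x i j0 * (b:ℝ) ^ q := mul_nonneg h0 (le_of_lt hqpos)
    have hlt : x i j0 * (b:ℝ) ^ q < ((b ^ q : ℕ) : ℝ) := by
      push_cast
      nlinarith
    exact (Nat.floor_lt hnn).mpr hlt
  -- fiberwise decomposition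
  have hmap : ∀ i ∈ Finset.univ.filter P, fl i ∈ Finset.range (b ^ q) :=
    fun i _ => Finset.mem_range.mpr (hfl_lt i)
  rw [Finset.card_eq_sum_card_fiberwise hmap]
  -- fiber bound
  have hfiber : ∀ A ∈ Finset.range (b ^ q),
      ((Finset.univ.filter P).filter (fun i => fl i = A)).card ≤ b ^ t := by
    intro A hA
    have hAlt : A < b ^ q := Finset.mem_range.mp hA
    set a : Fin d → ℕ := fun j => A / b ^ (q - k j) with ha
    have hapos : ∀ j, 0 < b ^ (q - k j) := fun j => Nat.pow_pos hb0
    have halt : ∀ j, a j < b ^ k j := by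
      intro j
      rw [ha]
      rw [Nat.div_lt_iff_lt_mul (hapos j)]
      calc A < b ^ q := hAlt
        _ = b ^ k j * b ^ (q - k j) := by
          have hkj := hkle j
          rw [← pow_add]; congr 1; omega
    have hnet' := hnet k a halt (by rw [hsum])
    rw [hsum] at hnet'
    have hms : m - s = t := by omega
    rw [hms] at hnet'
    set Q : Fin (b ^ m) → Prop := fun i => ∀ j,
      x i j ∈ Set.Ico ((a j : ℝ) / (b : ℝ) ^ k j) (((a j : ℝ) + 1) / (b : ℝ) ^ k j) with hQ
    have hcardQ : Nat.card {i // Q i} = (Finset.univ.filter Q).card := by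
      rw [Nat.card_eq_fintype_card, Fintype.card_subtype]
    rw [hcardQ] at hnet'
    rw [← hnet']
    apply Finset.card_le_card
    intro i hi
    simp only [Finset.mem_filter, Finset.mem_univ, true_and] at hi ⊢
    obtain ⟨hPi, hfli⟩ := hi
    intro j
    -- the diagonal value
    have hxj : x i j = x i j0 := hPi j j0
    set y := x i j0 with hy
    have hynn : 0 ≤ y := (hx i j0).1
    have hqpos : (0:ℝ) < (b:ℝ) ^ q := pow_pos hbR q
    have hcpos : (0:ℝ) < (b:ℝ) ^ (q - k j) := pow_pos hbR _
    have hkpos : (0:ℝ) < (b:ℝ) ^ (k j) := pow_pos hbR _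
    have hpow : (b:ℝ) ^ (k j) * (b:ℝ) ^ (q - k j) = (b:ℝ) ^ q := by
      have hkj := hkle j
      rw [← pow_add]; congr 1; omega
    -- A ≤ y * b^q < A + 1
    have hAle : (A : ℝ) ≤ y * (b:ℝ) ^ q := by
      have := Nat.floor_le (mul_nonneg hynn (le_of_lt hqpos)) (R := ℝ) (a := y * (b:ℝ) ^ q)
      rw [show (⌊y * (b:ℝ) ^ q⌋₊ = A) from hfli] at this
      exact this
    have hAgt : y * (b:ℝ) ^ q < (A : ℝ) + 1 := by
      have := Nat.lt_floor_add_one (y * (b:ℝ) ^ q)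
      rw [show (⌊y * (b:ℝ) ^ q⌋₊ = A) from hfli] at this
      exact_mod_cast this
    -- nat div facts
    have n1 : a j * b ^ (q - k j) ≤ A := Nat.div_mul_le_self _ _
    have n2 : A + 1 ≤ (a j + 1) * b ^ (q - k j) := by
      have : A < (a j + 1) * b ^ (q - k j) := by
        rw [ha]
        exact (Nat.div_lt_iff_lt_mul (hapos j)).mp (Nat.lt_succ_self _)
      omega
    have c1 : (a j : ℝ) * (b:ℝ) ^ (q - k j) ≤ (A : ℝ) := by exact_mod_cast n1
    have c2 : (A : ℝ) + 1 ≤ ((a j : ℝ) + 1) * (b:ℝ) ^ (q - k j) := by exact_mod_cast n2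
    rw [hxj]
    constructor
    · rw [div_le_iff₀ hkpos]
      have hA' : (A : ℝ) ≤ y * ((b:ℝ) ^ (k j) * (b:ℝ) ^ (q - k j)) := by rw [hpow]; exact hAle
      nlinarith
    · rw [lt_div_iff₀ hkpos]
      have hA' : y * ((b:ℝ) ^ (k j) * (b:ℝ) ^ (q - k j)) < (A : ℝ) + 1 := by
        rw [hpow]; exact hAgt
      nlinarith
  calc ∑ A ∈ Finset.range (b ^ q),
        ((Finset.univ.filter P).filter (fun i => fl i = A)).card
      ≤ ∑ _A ∈ Finset.range (b ^ q), b ^ t := Finset.sum_le_sum hfiber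
    _ = b ^ q * b ^ t := by rw [Finset.sum_const, Finset.card_range, smul_eq_mul]
    _ = b ^ (t + q) := by rw [← pow_add, Nat.add_comm]
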